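/- Let d ≥ 1, let |φ⟩ := (1/√d)·Σ_{a=0}^{d−1} |a⟩⊗|a⟩ ∈ ℂ^d⊗ℂ^d be the maximally entangled state, ρ := |φ⟩⟨φ|, and let Φ be the local measurement in the standard basis of the first factor, Φ(X) := Σ_a (E_aa ⊗ 1_d) X (E_aa ⊗ 1_d). Then Φ(ρ) = (1/d)·Σ_a E_aa ⊗ E_aa, and the three geometric quantities attaining the maximal violation of quantum realism evaluate to: ‖ρ − Φ(ρ)‖₂² = 1 − 1/d, F(ρ, Φ(ρ)) = 1/d, and Tr(√ρ · √Φ(ρ)) = 1/√d. -/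

import Mathlib

open Matrix Kronecker
open scoped ComplexOrder

noncomputable section

variable {n : Type*} [Fintype n] [DecidableEq n]

/-- `|X| = (X† X)^{1/2}`, the positive semidefinite absolute value of a matrix. -/
def matAbs (X : Matrix n n ℂ) : Matrix n n ℂ :=
  ((Matrix.posSemidef_conjTranspose_mul_self X).1.eigenvectorUnitary : Matrix n n ℂ) *
    diagonal (((↑) : ℝ → ℂ) ∘ (√·) ∘ (Matrix.posSemidef_conjTranspose_mul_self X).1.eigenvalues) *
    (star (Matrix.posSemidef_conjTranspose_mul_self X).1.eigenvectorUnitary : Matrix n n ℂ)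

/-- `Tr |X|^p`, with the `p`-th power taken through the functional calculus. -/
def traceAbsPow (p : ℝ) (X : Matrix n n ℂ) : ℝ :=
  (Matrix.trace (cfc (fun x : ℝ => x ^ p) (matAbs X))).re

/-- The Schatten `p`-norm `‖X‖_p = (Tr |X|^p)^(1/p)`. -/
def schatten (p : ℝ) (X : Matrix n n ℂ) : ℝ :=
  (traceAbsPow p X) ^ (1 / p)

/-- Matrix square root via the functional calculus (agrees with the positive semidefinite
square root on positive semidefinite matrices). -/
def msqrt (X : Matrix n n ℂ) : Matrix n n ℂ := cfc Real.sqrt X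

/-- Matrix natural logarithm via the functional calculus. -/
def mlog (X : Matrix n n ℂ) : Matrix n n ℂ := cfc Real.log X

/-- Von Neumann entropy `S(ρ) = -Tr(ρ log ρ)`. -/
def vnEntropy (ρ : Matrix n n ℂ) : ℝ := -(Matrix.trace (ρ * mlog ρ)).re

/-- Relative entropy `S(ρ‖σ) = Tr(ρ log ρ) - Tr(ρ log σ)`. -/
def relEnt (ρ σ : Matrix n n ℂ) : ℝ :=
  (Matrix.trace (ρ * mlog ρ)).re - (Matrix.trace (ρ * mlog σ)).re

/-- Uhlmann fidelity `F(ρ,σ) = (Tr|√σ √ρ|)²`. -/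
def fidelity (ρ σ : Matrix n n ℂ) : ℝ :=
  ((Matrix.trace (matAbs (msqrt σ * msqrt ρ))).re) ^ 2

/-- Partial trace over the second factor. -/
def ptraceE {S E : Type*} [Fintype E] (Ω : Matrix (S × E) (S × E) ℂ) : Matrix S S ℂ :=
  Matrix.of fun s s' => ∑ e, Ω (s, e) (s', e)

/-- Partial trace over the first factor. -/
def ptraceS {S E : Type*} [Fintype S] (Ω : Matrix (S × E) (S × E) ℂ) : Matrix E E ℂ :=
  Matrix.of fun e e' => ∑ s, Ω (s, e) (s, e')

/-- The maximally entangled vector `|φ⟩ = (1/√d) Σ_a |a⟩ ⊗ |a⟩` of two qudits. -/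
def maxEntVec (d : ℕ) : Fin d × Fin d → ℂ :=
  fun x => if x.1 = x.2 then ((Real.sqrt d : ℝ) : ℂ)⁻¹ else 0

/-- The maximally entangled state `ρ = |φ⟩⟨φ|`. -/
def maxEntState (d : ℕ) : Matrix (Fin d × Fin d) (Fin d × Fin d) ℂ :=
  Matrix.vecMulVec (maxEntVec d) (star (maxEntVec d))

/-- The local measurement in the standard basis of the first factor. -/
def measStd (d : ℕ) (X : Matrix (Fin d × Fin d) (Fin d × Fin d) ℂ) :
    Matrix (Fin d × Fin d) (Fin d × Fin d) ℂ :=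
  ∑ a : Fin d,
    (Matrix.single a a (1 : ℂ) ⊗ₖ (1 : Matrix (Fin d) (Fin d) ℂ)) * X *
      (Matrix.single a a (1 : ℂ) ⊗ₖ (1 : Matrix (Fin d) (Fin d) ℂ))


/-! ### Auxiliary lemmas -/

section Aux

lemma spec_nonneg {A : Matrix n n ℂ} (hA : A.PosSemidef) : ∀ x ∈ spectrum ℝ A, 0 ≤ x := by
  intro x hx
  obtain ⟨i, rfl⟩ := hA.1.spectrum_real_eq_range_eigenvalues ▸ hx
  exact hA.eigenvalues_nonneg i

lemma msqrt_eq {A : Matrix n n ℂ} (hA : A.PosSemidef) : msqrt A * msqrt A = A := by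
  have hsa : IsSelfAdjoint A := hA.1
  rw [msqrt, ← cfc_mul Real.sqrt Real.sqrt A]
  conv_rhs => rw [← cfc_id ℝ A]
  refine cfc_congr fun x hx => ?_
  simp [Real.mul_self_sqrt (spec_nonneg hA x hx)]

lemma matAbs_eq (X : Matrix n n ℂ) : matAbs X = msqrt (Xᴴ * X) := by
  rw [msqrt, (Matrix.posSemidef_conjTranspose_mul_self X).1.cfc_eq]; rfl

lemma msqrt_of_sq {A B : Matrix n n ℂ} (hB : B.PosSemidef) (h : B * B = A) :
    msqrt A = B := by
  have hA : A.PosSemidef := by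
    rw [← h]; nth_rewrite 1 [← hB.1.eq]
    exact Matrix.posSemidef_conjTranspose_mul_self B
  have hsb : IsSelfAdjoint B := hB.1
  rw [← h, msqrt, ← pow_two, ← cfc_comp_pow Real.sqrt 2 B]
  conv_rhs => rw [← cfc_id ℝ B]
  refine cfc_congr fun x hx => ?_
  simp [Real.sqrt_sq (spec_nonneg hB x hx)]

lemma matAbs_of_posSemidef {A : Matrix n n ℂ} (hA : A.PosSemidef) : matAbs A = A :=
  by rw [matAbs_eq]; exact msqrt_of_sq hA (by rw [hA.1.eq])

lemma traceAbsPow_two (X : Matrix n n ℂ) :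
    traceAbsPow 2 X = (Matrix.trace (Xᴴ * X)).re := by
  rw [traceAbsPow]
  have h1 : (fun x : ℝ => x ^ (2:ℝ)) = (fun x : ℝ => x ^ (2:ℕ)) := by
    funext x; rw [← Real.rpow_natCast x 2]; norm_num
  have hsa : IsSelfAdjoint (matAbs X) :=
    by rw [matAbs_eq, msqrt]; exact cfc_predicate _ _
  rw [h1, cfc_pow_id _ 2 hsa, pow_two, matAbs_eq,
    msqrt_eq (Matrix.posSemidef_conjTranspose_mul_self X)]

variable (d : ℕ)

lemma sq_inv_sqrt : ((Real.sqrt d : ℝ) : ℂ)⁻¹ * ((Real.sqrt d : ℝ) : ℂ)⁻¹ = ((d:ℝ):ℂ)⁻¹ := by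
  rw [← mul_inv, ← Complex.ofReal_mul, Real.mul_self_sqrt (Nat.cast_nonneg d)]

lemma maxEntState_apply (x y : Fin d × Fin d) :
    maxEntState d x y = if x.1 = x.2 ∧ y.1 = y.2 then ((d:ℂ))⁻¹ else 0 := by
  simp only [maxEntState, Matrix.vecMulVec_apply, maxEntVec, Pi.star_apply]
  split_ifs with h1 h2 h3 h4 h5 <;>
    simp_all [← Complex.ofReal_inv, sq_inv_sqrt d, ← mul_inv, ← Complex.ofReal_mul,
      Real.mul_self_sqrt (Nat.cast_nonneg d)]
    <;> push_cast <;> ring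

lemma Q_eq (a : Fin d) :
    (Matrix.single a a (1:ℂ) ⊗ₖ (1 : Matrix (Fin d) (Fin d) ℂ))
      = Matrix.diagonal (fun x : Fin d × Fin d => if x.1 = a then 1 else 0) := by
  ext ⟨i, j⟩ ⟨k, l⟩
  simp [Matrix.single, Matrix.one_apply, Matrix.diagonal, Prod.ext_iff]
  aesop

lemma P_eq :
    (∑ a : Fin d, Matrix.single a a (1:ℂ) ⊗ₖ Matrix.single a a (1:ℂ))
      = Matrix.diagonal (fun x : Fin d × Fin d => if x.1 = x.2 then 1 else 0) := by
  ext ⟨i, j⟩ ⟨k, l⟩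
  simp [Matrix.sum_apply, Matrix.single, Matrix.diagonal, Prod.ext_iff]
  aesop (add simp [Finset.filter_eq', Finset.filter_and,
    Finset.singleton_inter_of_notMem, Finset.mem_singleton])

lemma part1 : measStd d (maxEntState d)
    = (d : ℂ)⁻¹ • ∑ a : Fin d,
        Matrix.single a a (1 : ℂ) ⊗ₖ Matrix.single a a (1 : ℂ) := by
  rw [P_eq]
  ext x y
  rw [measStd]
  simp only [Matrix.sum_apply, Q_eq, Matrix.diagonal_mul, Matrix.mul_diagonal,
    maxEntState_apply, Matrix.smul_apply, Matrix.diagonal_apply, smul_eq_mul]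
  rcases x with ⟨a, b⟩; rcases y with ⟨c, e⟩
  simp only []
  by_cases h1 : a = b <;> by_cases h2 : c = e <;>
    simp [h1, h2, Finset.sum_ite_eq, Prod.ext_iff] <;> aesop

abbrev Dm : Matrix (Fin d × Fin d) (Fin d × Fin d) ℂ :=
  Matrix.diagonal (fun x : Fin d × Fin d => if x.1 = x.2 then 1 else 0)

lemma psd_smul {A : Matrix (Fin d × Fin d) (Fin d × Fin d) ℂ} (hA : A.PosSemidef)
    {r : ℝ} (hr : 0 ≤ r) : ((r:ℂ) • A).PosSemidef := by
  refine ⟨?_, fun x => ?_⟩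
  · unfold Matrix.IsHermitian
    rw [Matrix.conjTranspose_smul, hA.1.eq]
    simp
  · exact (hA.smul (Complex.zero_le_real.mpr hr)).2 x

lemma rho_psd : (maxEntState d).PosSemidef := by
  rw [maxEntState, Matrix.vecMulVec_eq Unit, ← Matrix.conjTranspose_replicateCol]
  exact Matrix.posSemidef_self_mul_conjTranspose _

lemma D_mul_rho : Dm d * maxEntState d = maxEntState d := by
  ext x y
  rw [Matrix.diagonal_mul, maxEntState_apply]
  split_ifs with h <;> simp_all [maxEntState_apply]

lemma rho_mul_D : maxEntState d * Dm d = maxEntState d := by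
  ext x y
  rw [Matrix.mul_diagonal, maxEntState_apply]
  split_ifs with h <;> simp_all [maxEntState_apply]

lemma D_mul_D : Dm d * Dm d = Dm d := by
  rw [Matrix.diagonal_mul_diagonal]
  ext x y
  simp only [Matrix.diagonal_apply]
  split_ifs <;> ring

lemma rho_mul_rho (hd : 1 ≤ d) : maxEntState d * maxEntState d = maxEntState d := by
  have hd0 : (d:ℂ) ≠ 0 := Nat.cast_ne_zero.mpr (by omega)
  ext x y
  simp only [Matrix.mul_apply, maxEntState_apply]
  rw [Fintype.sum_prod_type]
  by_cases h1 : x.1 = x.2 <;> by_cases h2 : y.1 = y.2 <;>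
    simp [h1, h2, Finset.sum_ite_eq, Finset.sum_ite_eq', mul_comm, hd0]

lemma trace_rho (hd : 1 ≤ d) : Matrix.trace (maxEntState d) = 1 := by
  have hd0 : (d:ℂ) ≠ 0 := Nat.cast_ne_zero.mpr (by omega)
  rw [Matrix.trace]
  simp only [Matrix.diag_apply, maxEntState_apply]
  rw [Fintype.sum_prod_type]
  simp [Finset.sum_ite_eq, Finset.sum_ite_eq', hd0]

lemma trace_D : Matrix.trace (Dm d) = (d : ℂ) := by
  rw [Matrix.trace]
  simp only [Matrix.diag_apply, Matrix.diagonal_apply_eq]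
  rw [Fintype.sum_prod_type]
  simp [Finset.sum_ite_eq, Finset.sum_ite_eq']

lemma D_psd : (Dm d).PosSemidef :=
  Matrix.PosSemidef.diagonal (by intro x; dsimp only; split_ifs <;> simp)

end Aux

/-- For the maximally entangled state `ρ`, `Φ(ρ) = (1/d) Σ_a E_aa ⊗ E_aa`, and the
geometric quantities attaining maximal violation of quantum realism evaluate to
`‖ρ - Φ(ρ)‖₂² = 1 - 1/d`, `F(ρ, Φ(ρ)) = 1/d`, and `Tr(√ρ √Φ(ρ)) = 1/√d`. -/
theorem maxEnt_geometric_quantities (d : ℕ) (hd : 1 ≤ d) :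
    measStd d (maxEntState d)
      = (d : ℂ)⁻¹ • ∑ a : Fin d,
          Matrix.single a a (1 : ℂ) ⊗ₖ Matrix.single a a (1 : ℂ) ∧
    schatten 2 (maxEntState d - measStd d (maxEntState d)) ^ 2 = 1 - 1 / (d : ℝ) ∧
    fidelity (maxEntState d) (measStd d (maxEntState d)) = 1 / (d : ℝ) ∧
    (Matrix.trace (msqrt (maxEntState d) * msqrt (measStd d (maxEntState d)))).re
      = 1 / Real.sqrt d := by
  have hdc : (d:ℂ) ≠ 0 := Nat.cast_ne_zero.mpr (by omega)
  have hdr : (0:ℝ) < d := by exact_mod_cast Nat.pos_of_ne_zero (by omega)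
  have hσ : measStd d (maxEntState d) = (d:ℂ)⁻¹ • Dm d := by rw [part1, P_eq]
  set ρ := maxEntState d with hρdef
  have hρρ := rho_mul_rho d hd
  have hc2 : ((Real.sqrt d : ℝ) : ℂ)⁻¹ * ((Real.sqrt d : ℝ) : ℂ)⁻¹ = (d:ℂ)⁻¹ := by
    rw [sq_inv_sqrt d]; push_cast; ring
  have hcnn : (0:ℝ) ≤ (Real.sqrt d)⁻¹ := inv_nonneg.mpr (Real.sqrt_nonneg d)
  have hmsρ : msqrt ρ = ρ := msqrt_of_sq (rho_psd d) hρρ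
  have hmsσ : msqrt (measStd d ρ) = (((Real.sqrt d)⁻¹ : ℝ) : ℂ) • Dm d := by
    rw [hσ]
    refine msqrt_of_sq (psd_smul d (D_psd d) hcnn) ?_
    rw [Matrix.smul_mul, Matrix.mul_smul, smul_smul, D_mul_D]
    rw [Complex.ofReal_inv, hc2]
  refine ⟨part1 d, ?_, ?_, ?_⟩
  · -- Schatten 2-norm
    set X := ρ - measStd d ρ with hX
    have hXh : Xᴴ = X := by
      rw [hX, hσ, Matrix.conjTranspose_sub, Matrix.conjTranspose_smul,
        (rho_psd d).1.eq, (D_psd d).1.eq]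
      congr 1
      simp
    have htr : Matrix.trace (X * X) = ((1 - (d:ℝ)⁻¹ : ℝ) : ℂ) := by
      rw [hX, hσ, sub_mul, mul_sub, mul_sub, Matrix.smul_mul, Matrix.mul_smul,
        Matrix.mul_smul, Matrix.smul_mul, smul_smul, hρρ, rho_mul_D, D_mul_rho, D_mul_D]
      simp only [Matrix.trace_sub, Matrix.trace_smul]
      rw [trace_rho d hd, trace_D]
      simp only [smul_eq_mul]
      push_cast
      field_simp
      ring
    have ht2 : traceAbsPow 2 X = 1 - (d:ℝ)⁻¹ := by
      rw [traceAbsPow_two, hXh, htr, Complex.ofReal_re]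
    have htnn : (0:ℝ) ≤ 1 - (d:ℝ)⁻¹ := by
      have h1 : (d:ℝ)⁻¹ ≤ 1 := by
        rw [inv_le_one_iff₀]
        right
        exact_mod_cast hd
      linarith
    rw [schatten, ht2, ← Real.rpow_natCast ((1 - (d:ℝ)⁻¹) ^ ((1:ℝ)/2)) 2,
      ← Real.rpow_mul htnn]
    norm_num
  · -- fidelity
    rw [fidelity, hmsρ, hmsσ, Matrix.smul_mul, D_mul_rho,
      matAbs_of_posSemidef (psd_smul d (rho_psd d) hcnn),
      Matrix.trace_smul, trace_rho d hd, smul_eq_mul, mul_one, Complex.ofReal_re]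
    rw [inv_pow, Real.sq_sqrt hdr.le, one_div]
  · -- trace of product of square roots
    rw [hmsρ, hmsσ, Matrix.mul_smul, rho_mul_D, Matrix.trace_smul, trace_rho d hd,
      smul_eq_mul, mul_one, Complex.ofReal_re, one_div]
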